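/- For 0 ≤ ρ < 1 and integer n ≥ 1, the function conj(M_ρ(e^{iθ}))^n = ((e^{iθ} - ρ)/(ρe^{iθ} - 1))^{-n} has the absolutely convergent Fourier-type expansion: ((e^{iθ} - ρ)/(ρe^{iθ} - 1))^{-n} = Σ_{k'=0}^{∞} Σ_{k=0}^{n} (-1)^{n-k} · C(n + k' - 1, k') · C(n, k) · ρ^{k + k'} · e^{i(k - k' - n)θ}, valid for all θ ∈ ℝ. -/

import Mathlib

open Complex Finset

theorem mobius_conj_pow_fourier_expansion (ρ : ℝ) (hρ0 : 0 ≤ ρ) (hρ1 : ρ < 1)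
    (n : ℕ) (hn : 1 ≤ n) (θ : ℝ) :
    Summable (fun k' : ℕ => ‖∑ k ∈ Finset.range (n + 1),
        ((-1 : ℂ) ^ (n - k) * ((n + k' - 1).choose k' : ℂ) * (n.choose k : ℂ) *
          (ρ : ℂ) ^ (k + k') *
          Complex.exp (Complex.I * (((k : ℤ) - k' - n : ℤ) : ℂ) * θ))‖) ∧
    HasSum (fun k' : ℕ => ∑ k ∈ Finset.range (n + 1),
        ((-1 : ℂ) ^ (n - k) * ((n + k' - 1).choose k' : ℂ) * (n.choose k : ℂ) *
          (ρ : ℂ) ^ (k + k') *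
          Complex.exp (Complex.I * (((k : ℤ) - k' - n : ℤ) : ℂ) * θ)))
      (((Complex.exp (Complex.I * θ) - ρ) / (ρ * Complex.exp (Complex.I * θ) - 1)) ^
        (-(n : ℤ))) := by
  set z : ℂ := Complex.exp (Complex.I * θ) with hz_def
  have hz0 : z ≠ 0 := Complex.exp_ne_zero _
  have hzabs : ‖z‖ = 1 := by
    rw [hz_def, Complex.norm_exp]
    simp [Complex.mul_re]
  have hw : ‖(ρ : ℂ) / z‖ < 1 := by
    rw [norm_div, hzabs, div_one, Complex.norm_real, Real.norm_eq_abs, _root_.abs_of_nonneg hρ0]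
    exact hρ1
  set w : ℂ := (ρ : ℂ) / z with hw_def
  set c : ℂ := ((ρ : ℂ) * z - 1) ^ n * z ^ (-(n : ℤ)) with hc_def
  -- key rewriting of the inner sum
  have hinner : ∀ k' : ℕ, (∑ k ∈ Finset.range (n + 1),
      ((-1 : ℂ) ^ (n - k) * ((n + k' - 1).choose k' : ℂ) * (n.choose k : ℂ) *
        (ρ : ℂ) ^ (k + k') *
        Complex.exp (Complex.I * (((k : ℤ) - k' - n : ℤ) : ℂ) * θ)))
      = c * (((k' + (n - 1)).choose (n - 1) : ℂ) * w ^ k') := by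
    intro k'
    have hchoose : (n + k' - 1).choose k' = (k' + (n - 1)).choose (n - 1) := by
      have h := Nat.choose_symm (Nat.le_add_right k' (n - 1))
      rw [show k' + (n - 1) - k' = n - 1 by omega] at h
      rw [show n + k' - 1 = k' + (n - 1) by omega, ← h]
    have hexp : ∀ k : ℕ, Complex.exp (Complex.I * (((k : ℤ) - k' - n : ℤ) : ℂ) * θ)
        = z ^ ((k : ℤ) - k' - n) := by
      intro k
      rw [hz_def, ← Complex.exp_int_mul]
      congr 1
      push_cast
      ring
    have hbin : ((ρ : ℂ) * z - 1) ^ n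
        = ∑ k ∈ Finset.range (n + 1), ((ρ : ℂ) * z) ^ k * (-1 : ℂ) ^ (n - k) * n.choose k := by
      rw [sub_eq_add_neg, add_pow]
    rw [hc_def, hbin, Finset.sum_mul, Finset.sum_mul]
    apply Finset.sum_congr rfl
    intro k hk
    rw [hexp k, hchoose, hw_def]
    have h1 : z ^ ((k : ℤ) - k' - n) = z ^ k * (z ^ k')⁻¹ * (z ^ n)⁻¹ := by
      rw [show ((k : ℤ) - k' - n) = (k : ℤ) + (-(k' : ℤ)) + (-(n : ℤ)) by ring,
        zpow_add₀ hz0, zpow_add₀ hz0, zpow_neg, zpow_neg, zpow_natCast, zpow_natCast,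
        zpow_natCast]
    rw [h1, zpow_neg, zpow_natCast]
    field_simp
    have hzk : z ^ k' * z⁻¹ ^ k' = 1 := by rw [← mul_pow, mul_inv_cancel₀ hz0, one_pow]
    linear_combination (-(((k' + (n - 1)).choose (n - 1) : ℂ) * (n.choose k : ℂ) * (ρ : ℂ) ^ k' *
      (ρ : ℂ) ^ k * z ^ k)) * hzk
  -- the binomial series
  have hsum : HasSum (fun k' : ℕ => ((k' + (n - 1)).choose (n - 1) : ℂ) * w ^ k')
      (1 / (1 - w) ^ ((n - 1) + 1)) :=
    hasSum_choose_mul_geometric_of_norm_lt_one (n - 1) hw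
  have hn1 : (n - 1) + 1 = n := by omega
  rw [hn1] at hsum
  have hsum' := hsum.mul_left c
  -- identify the sum value
  have hzρ : z - (ρ : ℂ) ≠ 0 := by
    intro h
    rw [sub_eq_zero.mp h] at hzabs
    rw [Complex.norm_real, Real.norm_eq_abs, _root_.abs_of_nonneg hρ0] at hzabs
    linarith
  have hρz : (ρ : ℂ) * z - 1 ≠ 0 := by
    intro h
    have h2 : ‖(ρ : ℂ) * z‖ = 1 := by
      rw [sub_eq_zero.mp h, norm_one]
    rw [norm_mul, hzabs, mul_one, Complex.norm_real, Real.norm_eq_abs,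
      _root_.abs_of_nonneg hρ0] at h2
    linarith
  have h1w : (1 : ℂ) - w ≠ 0 := by
    rw [hw_def]
    intro h
    apply hzρ
    have h2 : (ρ : ℂ) / z = 1 := by linear_combination -h
    rw [div_eq_one_iff_eq hz0] at h2
    simp [h2]
  have hval : c * (1 / (1 - w) ^ n) = ((z - ρ) / ((ρ : ℂ) * z - 1)) ^ (-(n : ℤ)) := by
    have hzw : (1 : ℂ) - w = (z - ρ) / z := by rw [hw_def]; field_simp
    rw [zpow_neg, zpow_natCast, hc_def, zpow_neg, zpow_natCast, hzw, div_pow, div_pow]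
    rw [inv_div]
    field_simp
  rw [hval] at hsum'
  have hfin : HasSum (fun k' : ℕ => ∑ k ∈ Finset.range (n + 1),
      ((-1 : ℂ) ^ (n - k) * ((n + k' - 1).choose k' : ℂ) * (n.choose k : ℂ) *
        (ρ : ℂ) ^ (k + k') *
        Complex.exp (Complex.I * (((k : ℤ) - k' - n : ℤ) : ℂ) * θ)))
      (((z - ρ) / ((ρ : ℂ) * z - 1)) ^ (-(n : ℤ))) := by
    simp only [hinner]
    exact hsum'
  exact ⟨summable_norm_iff.mpr hfin.summable, hfin⟩
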